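/- Let s be a prime power, n ≥ 2, and fix a subset G ⊆ F_s with |G| = k, 1 ≤ k ≤ s. Let h be a nonzero linear form in x₂,...,xₙ and a₁ ≠ a₂ elements of F_s. Restrict the domain to Ω = {x ∈ F_sⁿ : x₁ ∈ G}. Then for the functions f(x) = a₁x₁ + h(x₂,...,xₙ) and g(x) = a₂x₁ + h(x₂,...,xₙ) on Ω, the projected A₂ value A₂(f,g) = |Ω|⁻²·Σ_{u₁,u₂ ∈ F_s*} |Σ_{x ∈ Ω} χ(u₁f(x) + u₂g(x))|² equals (s − k)/k, where χ is any nontrivial additive character of F_s. -/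

import Mathlib

set_option linter.unusedSectionVars false
set_option maxHeartbeats 1000000
open Finset Complex

section helpers
variable {F : Type*} [Field F] [Fintype F] [DecidableEq F]

private lemma sum_chi (χ : F → ℂ) (hadd : ∀ x y, χ (x + y) = χ x * χ y)
    (hnt : ∃ x, χ x ≠ 1) : ∑ t : F, χ t = 0 := by
  obtain ⟨x, hx⟩ := hnt
  have key : χ x * ∑ t : F, χ t = ∑ t : F, χ t := by
    rw [Finset.mul_sum]
    exact Fintype.sum_equiv (Equiv.addLeft x) _ _ (fun t => (hadd x t).symm)
  have h2 := sub_eq_zero.mpr key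
  rw [← sub_one_mul] at h2
  rcases mul_eq_zero.mp h2 with h | h
  · exact absurd (sub_eq_zero.mp h) hx
  · exact h

private lemma chi_ne_zero (χ : F → ℂ) (habs : ∀ x, ‖χ x‖ = 1) (t : F) :
    χ t ≠ 0 := by
  intro h0
  have := habs t
  rw [h0] at this
  simp at this

private lemma chi_zero (χ : F → ℂ) (hadd : ∀ x y, χ (x + y) = χ x * χ y)
    (habs : ∀ x, ‖χ x‖ = 1) : χ 0 = 1 := by
  have hne := chi_ne_zero χ habs 0
  have h0 : χ 0 * χ 0 = χ 0 * 1 := by rw [mul_one, ← hadd 0 0, add_zero]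
  exact mul_left_cancel₀ hne h0

private lemma conj_chi (χ : F → ℂ) (hadd : ∀ x y, χ (x + y) = χ x * χ y)
    (habs : ∀ x, ‖χ x‖ = 1) (t : F) : (starRingEnd ℂ) (χ t) = χ (-t) := by
  have h1 : χ t * χ (-t) = 1 := by
    rw [← hadd]; simp [chi_zero χ hadd habs]
  have h2 : χ t * (starRingEnd ℂ) (χ t) = 1 := by
    rw [Complex.mul_conj, ← Complex.ofReal_one, Complex.ofReal_inj, ← Complex.sq_norm, habs]
    norm_num
  exact mul_left_cancel₀ (chi_ne_zero χ habs t) (h2.trans h1.symm)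

private lemma sum_chi_mul' (χ : F → ℂ) (hadd : ∀ x y, χ (x + y) = χ x * χ y)
    (habs : ∀ x, ‖χ x‖ = 1)
    (hnt : ∃ x, χ x ≠ 1) (c : F) :
    ∑ v : F, χ (v * c) = if c = 0 then (Fintype.card F : ℂ) else 0 := by
  split_ifs with hc
  · subst hc; simp [chi_zero χ hadd habs]
  · calc ∑ v : F, χ (v * c) = ∑ v : F, χ v :=
          Fintype.sum_equiv (Equiv.mulRight₀ c hc) _ _ (fun v => rfl)
      _ = 0 := sum_chi χ hadd hnt

private lemma sum_chi_form (χ : F → ℂ) (hadd : ∀ x y, χ (x + y) = χ x * χ y)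
    (hnt : ∃ x, χ x ≠ 1) {V : Type*} [AddCommGroup V] [Module F V] [Fintype V]
    (h : V →ₗ[F] F) (hh : h ≠ 0) {c : F} (hc : c ≠ 0) :
    ∑ y : V, χ (c * h y) = 0 := by
  obtain ⟨x, hx⟩ := hnt
  obtain ⟨z, hz⟩ : ∃ z, h z ≠ 0 := by
    by_contra hz
    push_neg at hz
    exact hh (LinearMap.ext fun v => by simpa using hz v)
  set y₀ : V := ((x / c) / h z) • z with hy₀
  have hhy₀ : c * h y₀ = x := by
    rw [hy₀, map_smul, smul_eq_mul]
    field_simp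
  have key : χ x * ∑ y : V, χ (c * h y) = ∑ y : V, χ (c * h y) := by
    rw [Finset.mul_sum]
    refine Fintype.sum_equiv (Equiv.addLeft y₀) _ _ (fun y => ?_)
    simp only [Equiv.coe_addLeft]
    rw [map_add, mul_add, hadd, hhy₀]
  have h2 := sub_eq_zero.mpr key
  rw [← sub_one_mul] at h2
  rcases mul_eq_zero.mp h2 with h' | h'
  · exact absurd (sub_eq_zero.mp h') hx
  · exact h'

private lemma sum_sq_abs (χ : F → ℂ) (hadd : ∀ x y, χ (x + y) = χ x * χ y)
    (habs : ∀ x, ‖χ x‖ = 1) (hnt : ∃ x, χ x ≠ 1) (G : Finset F) :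
    ∑ v : F, (‖∑ t ∈ G, χ (v * t)‖) ^ 2
      = (Fintype.card F : ℝ) * G.card := by
  have key : ∑ v : F, (∑ t ∈ G, χ (v * t)) * (starRingEnd ℂ) (∑ t ∈ G, χ (v * t))
      = ((Fintype.card F : ℂ) * G.card) := by
    have expand : ∀ v : F, (∑ t ∈ G, χ (v * t)) * (starRingEnd ℂ) (∑ t ∈ G, χ (v * t))
        = ∑ t ∈ G, ∑ t' ∈ G, χ (v * (t - t')) := by
      intro v
      rw [map_sum, Finset.sum_mul_sum]
      refine Finset.sum_congr rfl fun t _ => Finset.sum_congr rfl fun t' _ => ?_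
      rw [conj_chi χ hadd habs, ← hadd]
      ring_nf
    rw [Finset.sum_congr rfl (fun v _ => expand v), Finset.sum_comm]
    have inner : ∀ t ∈ G, ∑ v : F, ∑ t' ∈ G, χ (v * (t - t'))
        = (Fintype.card F : ℂ) := by
      intro t ht
      rw [Finset.sum_comm]
      have h1 : ∀ t' ∈ G, ∑ v : F, χ (v * (t - t'))
          = if t = t' then (Fintype.card F : ℂ) else 0 := by
        intro t' _
        rw [sum_chi_mul' χ hadd habs hnt]
        simp [sub_eq_zero]
      rw [Finset.sum_congr rfl h1, Finset.sum_ite_eq G t (fun _ => (Fintype.card F : ℂ)),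
        if_pos ht]
    rw [Finset.sum_congr rfl inner, Finset.sum_const, nsmul_eq_mul, mul_comm]
  have cast : ∀ v : F, (‖∑ t ∈ G, χ (v * t)‖) ^ 2
      = Complex.normSq (∑ t ∈ G, χ (v * t)) := fun v => Complex.sq_norm _
  rw [Finset.sum_congr rfl (fun v _ => cast v)]
  apply Complex.ofReal_injective
  push_cast
  rw [← key]
  push_cast [Complex.mul_conj]
  rfl

end helpers

/-- Lemma 13(ii): on the restricted domain `Ω = G × F^{n−1}` with `|G| = k`,
the columns `a₁x₁ + h` and `a₂x₁ + h` (with `a₁ ≠ a₂`, `h` a nonzero linear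
form) have projected `A₂` value `(s − k)/k`. -/
theorem projected_A2_branching
    {F : Type*} [Field F] [Fintype F] [DecidableEq F]
    {n : ℕ} (hn : 2 ≤ n)
    (χ : F → ℂ) (hadd : ∀ x y, χ (x + y) = χ x * χ y)
    (habs : ∀ x, ‖χ x‖ = 1) (hnt : ∃ x, χ x ≠ 1)
    (G : Finset F) (k : ℕ) (hk : 1 ≤ k) (hG : G.card = k)
    (h : (Fin (n - 1) → F) →ₗ[F] F) (hh : h ≠ 0)
    (a₁ a₂ : F) (ha : a₁ ≠ a₂) :
    let s := (Fintype.card F : ℝ)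
    let f : F × (Fin (n - 1) → F) → F := fun x => a₁ * x.1 + h x.2
    let g : F × (Fin (n - 1) → F) → F := fun x => a₂ * x.1 + h x.2
    ((k * Fintype.card F ^ (n - 1) : ℝ))⁻¹ ^ 2 *
        ∑ u₁ ∈ Finset.univ.filter (fun u : F => u ≠ 0),
          ∑ u₂ ∈ Finset.univ.filter (fun u : F => u ≠ 0),
            (‖∑ x ∈ G ×ˢ (Finset.univ : Finset (Fin (n - 1) → F)),
                χ (u₁ * f x + u₂ * g x)‖) ^ 2
      = (s - k) / k := by
  intro s f g
  set q : ℕ := Fintype.card F with hq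
  have hq1 : 1 ≤ q := Fintype.card_pos
  have hN : Fintype.card (Fin (n - 1) → F) = q ^ (n - 1) := by
    simp [hq]
  -- Step A: factorization
  have factor : ∀ u₁ u₂ : F,
      ∑ x ∈ G ×ˢ (Finset.univ : Finset (Fin (n - 1) → F)), χ (u₁ * f x + u₂ * g x)
        = (∑ t ∈ G, χ ((u₁ * a₁ + u₂ * a₂) * t)) *
          (∑ y : Fin (n - 1) → F, χ ((u₁ + u₂) * h y)) := by
    intro u₁ u₂
    rw [Finset.sum_product, Finset.sum_mul_sum]
    refine Finset.sum_congr rfl fun t _ => Finset.sum_congr rfl fun y _ => ?_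
    rw [← hadd]
    congr 1
    simp only [f, g]
    ring
  -- Step B: collapse inner sum
  have inner_eq : ∀ u₁ ∈ Finset.univ.filter (fun u : F => u ≠ 0),
      ∑ u₂ ∈ Finset.univ.filter (fun u : F => u ≠ 0),
          (‖∑ x ∈ G ×ˢ (Finset.univ : Finset (Fin (n - 1) → F)),
              χ (u₁ * f x + u₂ * g x)‖) ^ 2
        = (‖∑ t ∈ G, χ ((u₁ * (a₁ - a₂)) * t)‖) ^ 2 * ((q : ℝ) ^ (n - 1)) ^ 2 := by
    intro u₁ hu₁
    rw [Finset.mem_filter] at hu₁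
    have hu₁' : u₁ ≠ 0 := hu₁.2
    rw [Finset.sum_eq_single_of_mem (-u₁)
      (by rw [Finset.mem_filter]; exact ⟨Finset.mem_univ _, neg_ne_zero.mpr hu₁'⟩)]
    · rw [factor]
      have h0 : ∑ y : Fin (n - 1) → F, χ ((u₁ + -u₁) * h y) = (q : ℂ) ^ (n - 1) := by
        simp only [add_neg_cancel, zero_mul]
        rw [chi_zero χ hadd habs, Finset.sum_const, Finset.card_univ, hN]
        push_cast
        ring
      have hA : ∑ t ∈ G, χ ((u₁ * a₁ + -u₁ * a₂) * t)
          = ∑ t ∈ G, χ ((u₁ * (a₁ - a₂)) * t) :=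
        Finset.sum_congr rfl fun t _ => by congr 1; ring
      rw [h0, hA, norm_mul]
      have habs_pow : ‖(q : ℂ) ^ (n - 1)‖ = (q : ℝ) ^ (n - 1) := by
        rw [norm_pow, Complex.norm_natCast]
      rw [habs_pow, mul_pow]
    · intro b hb hbne
      rw [Finset.mem_filter] at hb
      have hc : u₁ + b ≠ 0 := fun hc => hbne (by linear_combination hc)
      rw [factor, sum_chi_form χ hadd hnt h hh hc, mul_zero, norm_zero]
      norm_num
  rw [Finset.sum_congr rfl inner_eq, ← Finset.sum_mul]
  -- Step C: reindex u₁ ↦ u₁ * (a₁ - a₂)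
  have hd : a₁ - a₂ ≠ 0 := sub_ne_zero.mpr ha
  have reindex : ∑ u₁ ∈ Finset.univ.filter (fun u : F => u ≠ 0),
      (‖∑ t ∈ G, χ ((u₁ * (a₁ - a₂)) * t)‖) ^ 2
      = ∑ v ∈ Finset.univ.filter (fun u : F => u ≠ 0),
        (‖∑ t ∈ G, χ (v * t)‖) ^ 2 := by
    refine Finset.sum_nbij' (fun u₁ => u₁ * (a₁ - a₂)) (fun v => v / (a₁ - a₂)) ?_ ?_ ?_ ?_ ?_
    · intro u hu
      rw [Finset.mem_filter] at hu ⊢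
      exact ⟨Finset.mem_univ _, mul_ne_zero hu.2 hd⟩
    · intro v hv
      rw [Finset.mem_filter] at hv ⊢
      exact ⟨Finset.mem_univ _, div_ne_zero hv.2 hd⟩
    · intro u _; field_simp
    · intro v _; field_simp
    · intro u _; rfl
  rw [reindex]
  -- Step D: evaluate the character sum over nonzero v
  have filt : Finset.univ.filter (fun u : F => u ≠ 0) = Finset.univ.erase 0 := by
    ext x; simp [Finset.mem_erase, and_comm]
  have sumD : ∑ v ∈ Finset.univ.filter (fun u : F => u ≠ 0),
      (‖∑ t ∈ G, χ (v * t)‖) ^ 2 = (q : ℝ) * k - (k : ℝ) ^ 2 := by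
    rw [filt, Finset.sum_erase_eq_sub (Finset.mem_univ 0),
      sum_sq_abs χ hadd habs hnt G, hG]
    have h00 : ∑ t ∈ G, χ ((0 : F) * t) = (k : ℂ) := by
      simp only [zero_mul, chi_zero χ hadd habs, Finset.sum_const, hG]
      push_cast; ring
    rw [h00, Complex.norm_natCast]
  rw [sumD]
  -- final arithmetic
  have hk0 : (k : ℝ) ≠ 0 := Nat.cast_ne_zero.mpr (by omega)
  have hqN : ((q : ℝ) ^ (n - 1)) ≠ 0 := by positivity
  simp only [s]
  rw [← hq]
  field_simp
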